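/- (Necessity of silence for message optimality) Suppose an AC protocol for γ^f with f < n − 1 has a nice run r in which, for every pair of distinct processes j and i, there is a message chain from j to i (i.e., no knowledge is gained via silence). Then at least 2n − 2 > n + f − 1 messages are sent in r; hence any AC protocol achieving n + f − 1 messages in nice runs must have some process learn some initial value without a message chain. -/

import Mathlib

open scoped Classical

/-- Message chain from `i` to `i'` in the run `M`. -/
def MsgChain {P : Type*} (M : Finset (P × P × ℕ)) (i i' : P) : Prop :=
  i = i' ∨ ∃ (ℓ : ℕ) (j : Fin (ℓ + 1) → P) (t : Fin ℓ → ℕ),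
    0 < ℓ ∧ j 0 = i ∧ j (Fin.last ℓ) = i' ∧ StrictMono t ∧
    ∀ k : Fin ℓ, (j k.castSucc, j k.succ, t k) ∈ M

lemma MsgChain.mono {P : Type*} {M M' : Finset (P × P × ℕ)} (h : M ⊆ M') {i i' : P}
    (hc : MsgChain M i i') : MsgChain M' i i' := by
  rcases hc with h' | ⟨ℓ, j, t, hℓ, h0, hl, hs, hm⟩
  · exact Or.inl h'
  · exact Or.inr ⟨ℓ, j, t, hℓ, h0, hl, hs, fun k => h (hm k)⟩

lemma MsgChain.exists_first {P : Type*} {M : Finset (P × P × ℕ)} {i i' : P}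
    (hc : MsgChain M i i') (hne : i ≠ i') : ∃ m ∈ M, m.1 = i := by
  rcases hc with h' | ⟨ℓ, j, t, hℓ, h0, hl, hs, hm⟩
  · exact absurd h' hne
  · refine ⟨_, hm ⟨0, hℓ⟩, ?_⟩
    have hz : (⟨0, hℓ⟩ : Fin ℓ).castSucc = (0 : Fin (ℓ + 1)) := by
      apply Fin.ext; simp
    simp [hz, h0]

lemma chain_last_max {P : Type*} {M : Finset (P × P × ℕ)} (key : P × P × ℕ → ℕ)
    (hkmono : ∀ m ∈ M, ∀ m' ∈ M, m.2.2 < m'.2.2 → key m < key m')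
    {i i' : P} {K : ℕ} (hne : i ≠ i')
    (hc : MsgChain (M.filter fun m => key m ≤ K) i i') :
    ∃ m ∈ M, key m ≤ K ∧ m.2.1 = i' ∧
      MsgChain (M.filter fun m' => key m' ≤ key m) i i' := by
  rcases hc with h' | ⟨ℓ, j, t, hℓ, h0, hl, hs, hm⟩
  · exact absurd h' hne
  · set kl : Fin ℓ := ⟨ℓ - 1, by omega⟩ with hkl
    obtain ⟨hklM, hklK⟩ := Finset.mem_filter.mp (hm kl)
    have hsucc : kl.succ = Fin.last ℓ := by
      apply Fin.ext
      simp [hkl]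
      omega
    refine ⟨(j kl.castSucc, j kl.succ, t kl), hklM, hklK, by rw [hsucc, hl], ?_⟩
    refine Or.inr ⟨ℓ, j, t, hℓ, h0, hl, hs, fun k => ?_⟩
    obtain ⟨hkM, hkK⟩ := Finset.mem_filter.mp (hm k)
    rw [Finset.mem_filter]
    refine ⟨hkM, ?_⟩
    rcases eq_or_ne k kl with rfl | hne'
    · exact le_rfl
    · have hlt : k < kl := by
        rw [Fin.lt_def]
        have hk := k.isLt
        have hv : (k : ℕ) ≠ ℓ - 1 := fun h => hne' (Fin.ext (by simp [hkl, h]))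
        simp [hkl]; omega
      exact le_of_lt (hkmono _ hkM _ hklM (hs hlt))

/-- The least key bound `K` such that every other process has a message chain
to `i` using only messages of key `≤ K`. -/
noncomputable def kap {P : Type*} (M : Finset (P × P × ℕ)) (key : P × P × ℕ → ℕ) (i : P) : ℕ :=
  sInf {K | ∀ j, j ≠ i → MsgChain (M.filter fun m => key m ≤ K) j i}

lemma exists_final {P : Type*} [Fintype P]
    (M : Finset (P × P × ℕ)) (key : P × P × ℕ → ℕ)
    (hkmono : ∀ m ∈ M, ∀ m' ∈ M, m.2.2 < m'.2.2 → key m < key m')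
    (hn : 1 < Fintype.card P)
    (hall : ∀ j i : P, j ≠ i → MsgChain M j i) (i : P) :
    (∀ j, j ≠ i → MsgChain (M.filter fun m => key m ≤ kap M key i) j i) ∧
    ∃ m ∈ M, key m = kap M key i ∧ m.2.1 = i := by
  have hW : ∀ j, j ≠ i → MsgChain (M.filter fun m => key m ≤ M.sup key) j i := by
    intro j hj
    have hfe : (M.filter fun m => key m ≤ M.sup key) = M :=
      Finset.filter_true_of_mem fun m hm => Finset.le_sup hm
    rw [hfe]; exact hall j i hj
  have hmem : kap M key i ∈ {K | ∀ j, j ≠ i → MsgChain (M.filter fun m => key m ≤ K) j i} :=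
    Nat.sInf_mem ⟨M.sup key, hW⟩
  refine ⟨hmem, ?_⟩
  rcases Nat.eq_zero_or_pos (kap M key i) with h0 | hpos
  · obtain ⟨j, hj⟩ := Fintype.exists_ne_of_one_lt_card hn i
    obtain ⟨m, hmM, hmle, hrecv, -⟩ := chain_last_max key hkmono hj (hmem j hj)
    exact ⟨m, hmM, by omega, hrecv⟩
  · have hnot : (kap M key i - 1) ∉
        {K | ∀ j, j ≠ i → MsgChain (M.filter fun m => key m ≤ K) j i} :=
      Nat.notMem_of_lt_sInf (show kap M key i - 1 < kap M key i by omega)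
    simp only [Set.mem_setOf_eq] at hnot
    push_neg at hnot
    obtain ⟨j, hj, hnc⟩ := hnot
    obtain ⟨m, hmM, hmle, hrecv, hch⟩ := chain_last_max key hkmono hj (hmem j hj)
    refine ⟨m, hmM, ?_, hrecv⟩
    by_contra hne'
    have hle1 : key m ≤ kap M key i - 1 := by omega
    refine hnc (hch.mono ?_)
    intro x hx
    obtain ⟨hx1, hx2⟩ := Finset.mem_filter.mp hx
    exact Finset.mem_filter.mpr ⟨hx1, le_trans hx2 hle1⟩

theorem lower_bound {P : Type*} [Fintype P] [DecidableEq P]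
    (hn : 2 < Fintype.card P) (M : Finset (P × P × ℕ))
    (hall : ∀ j i : P, j ≠ i → MsgChain M j i) :
    2 * Fintype.card P - 2 ≤ M.card := by
  classical
  have hP : 0 < Fintype.card P := by omega
  obtain ⟨a0⟩ := Fintype.card_pos_iff.mp hP
  obtain ⟨b0, hb0⟩ := Fintype.exists_ne_of_one_lt_card (by omega) a0
  obtain ⟨m0, hm0, -⟩ := MsgChain.exists_first (hall b0 a0 hb0) hb0
  have hMpos : 0 < M.card := Finset.card_pos.mpr ⟨m0, hm0⟩
  set key : P × P × ℕ → ℕ := fun m => m.2.2 * M.card + @List.idxOf _ instBEqOfDecidableEq m M.toList with hkeydef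
  have hidx : ∀ m ∈ M, @List.idxOf _ instBEqOfDecidableEq m M.toList < M.card := by
    intro m hm
    rw [← Finset.length_toList]
    exact (@List.idxOf_lt_length_iff _ instBEqOfDecidableEq _ _ _).mpr (Finset.mem_toList.mpr hm)
  have hkmono : ∀ m ∈ M, ∀ m' ∈ M, m.2.2 < m'.2.2 → key m < key m' := by
    intro m hm m' hm' ht
    have h1 := hidx m hm
    have h3 : m.2.2 * M.card + M.card ≤ m'.2.2 * M.card := by
      calc m.2.2 * M.card + M.card = (m.2.2 + 1) * M.card := by ring
        _ ≤ m'.2.2 * M.card := Nat.mul_le_mul_right _ ht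
    simp only [hkeydef]
    linarith
  have hkinj : ∀ m ∈ M, ∀ m' ∈ M, key m = key m' → m = m' := by
    intro m hm m' hm' h
    have h1 := hidx m hm
    have h2 := hidx m' hm'
    have e1 : key m % M.card = @List.idxOf _ instBEqOfDecidableEq m M.toList := by
      simp only [hkeydef]
      rw [Nat.add_comm, Nat.add_mul_mod_self_right]
      exact Nat.mod_eq_of_lt h1
    have e2 : key m' % M.card = @List.idxOf _ instBEqOfDecidableEq m' M.toList := by
      simp only [hkeydef]
      rw [Nat.add_comm, Nat.add_mul_mod_self_right]
      exact Nat.mod_eq_of_lt h2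
    have he : @List.idxOf _ instBEqOfDecidableEq m M.toList =
        @List.idxOf _ instBEqOfDecidableEq m' M.toList := by rw [← e1, ← e2, h]
    exact (@List.idxOf_inj _ instBEqOfDecidableEq _ _ _ _ (Finset.mem_toList.mpr hm)).mp he
  have hfinal := fun i => exists_final M key hkmono (by omega) hall i
  obtain ⟨a, -, hmin⟩ := Finset.exists_min_image Finset.univ (kap M key) ⟨a0, Finset.mem_univ a0⟩
  set B : Finset (P × P × ℕ) := M.filter (fun m => key m ≤ kap M key a) with hB
  have hBsub : Finset.univ.erase a ⊆ B.image Prod.fst := by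
    intro x hx
    have hxa : x ≠ a := Finset.ne_of_mem_erase hx
    obtain ⟨m, hmB, hm1⟩ := MsgChain.exists_first ((hfinal a).1 x hxa) hxa
    rw [← hB] at hmB
    exact Finset.mem_image.mpr ⟨m, hmB, hm1⟩
  have hCsub : Finset.univ.erase a ⊆ (M \ B).image (fun m => m.2.1) := by
    intro x hx
    have hxa : x ≠ a := Finset.ne_of_mem_erase hx
    obtain ⟨m, hmM, hmk, hmr⟩ := (hfinal x).2
    obtain ⟨ma, hmaM, hmak, hmar⟩ := (hfinal a).2
    have hlt : kap M key a < kap M key x := by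
      rcases lt_or_eq_of_le (hmin x (Finset.mem_univ x)) with h | h
      · exact h
      · exfalso
        apply hxa
        have hmma : m = ma := hkinj m hmM ma hmaM (by rw [hmk, hmak, h])
        rw [← hmr, hmma, hmar]
    refine Finset.mem_image.mpr ⟨m, ?_, hmr⟩
    rw [Finset.mem_sdiff]
    refine ⟨hmM, fun hmB' => ?_⟩
    rw [hB, Finset.mem_filter] at hmB'
    omega
  have hcard1 : Fintype.card P - 1 ≤ B.card := by
    have h1 : (Finset.univ.erase a).card = Fintype.card P - 1 := by
      rw [Finset.card_erase_of_mem (Finset.mem_univ a), Finset.card_univ]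
    calc Fintype.card P - 1 = (Finset.univ.erase a).card := h1.symm
      _ ≤ (B.image Prod.fst).card := Finset.card_le_card hBsub
      _ ≤ B.card := Finset.card_image_le
  have hcard2 : Fintype.card P - 1 ≤ (M \ B).card := by
    have h1 : (Finset.univ.erase a).card = Fintype.card P - 1 := by
      rw [Finset.card_erase_of_mem (Finset.mem_univ a), Finset.card_univ]
    calc Fintype.card P - 1 = (Finset.univ.erase a).card := h1.symm
      _ ≤ ((M \ B).image (fun m => m.2.1)).card := Finset.card_le_card hCsub
      _ ≤ (M \ B).card := Finset.card_image_le
  have hsum : (M \ B).card + B.card = M.card := by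
    apply Finset.card_sdiff_add_card_eq_card
    rw [hB]; exact Finset.filter_subset _ _
  omega

/-- Necessity of silence for message optimality: if in a nice run `r` of an AC
protocol for `γ^f` with `f < n - 1` every process has a message chain to every
other process (no information is conveyed by silence), then at least
`2n - 2` messages are sent in `r`, and `2n - 2 > n + f - 1`. Hence a protocol
sending only `n + f - 1` messages in nice runs must use silence. -/
theorem silence_necessary {P : Type*} [Fintype P] [DecidableEq P]
    (f : ℕ) (hf : 1 ≤ f) (hn : 2 < Fintype.card P)
    (hfn : f < Fintype.card P - 1)
    (M : Finset (P × P × ℕ)) (hM : ∀ m ∈ M, m.1 ≠ m.2.1)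
    (hall : ∀ j i : P, j ≠ i → MsgChain M j i) :
    2 * Fintype.card P - 2 ≤ M.card ∧
      Fintype.card P + f - 1 < 2 * Fintype.card P - 2 := by
  exact ⟨lower_bound hn M hall, by omega⟩
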